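/- Let q be a prime power and let k, n, d, d⊥ be positive integers with k < n such that ∑_{i=0}^{d-1} C(n,i)(q-1)^i < (1/2) q^{n-k} and ∑_{i=0}^{d⊥-1} C(n,i)(q-1)^i < (1/2) q^{k}. Then there exists an [n,k]_q linear code C with minimum distance ≥ d whose dual code C⊥ has minimum distance ≥ d⊥. -/

import Mathlib

set_option linter.unusedSectionVars false

open Finset Function Matrix

section counting
variable {M N : Type*} [AddCommGroup M] [AddCommGroup N] [Fintype M] [Fintype N]
  [DecidableEq N]

private lemma gv_fiber_card_const (φ : M →+ N) (hφ : Surjective φ) (y : N) :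
    #{x : M | φ x = y} = #{x : M | φ x = 0} := by
  obtain ⟨x₀, hx₀⟩ := hφ y
  apply Finset.card_bij' (fun x _ => x - x₀) (fun x _ => x + x₀)
  · intro a ha
    simp only [mem_filter, mem_univ, true_and] at ha ⊢
    simp [map_sub, ha, hx₀]
  · intro a ha
    simp only [mem_filter, mem_univ, true_and] at ha ⊢
    simp [map_add, ha, hx₀]
  · intro a _; abel
  · intro a _; abel

private lemma gv_count_preimage (φ : M →+ N) (hφ : Surjective φ) (S : Finset N) :
    #{x : M | φ x ∈ S} * Fintype.card N = S.card * Fintype.card M := by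
  have key : ∀ T : Finset N, #{x : M | φ x ∈ T} = T.card * #{x : M | φ x = 0} := by
    intro T
    rw [Finset.card_eq_sum_card_fiberwise (f := φ) (t := T)
      (fun x hx => by simpa using hx)]
    rw [Finset.sum_congr rfl (fun y hy => ?_), Finset.sum_const, smul_eq_mul]
    rw [Finset.filter_filter]
    rw [show #{x : M | φ x ∈ T ∧ φ x = y} = #{x : M | φ x = y} from by
      congr 1; ext x; simp (config := {contextual := true}) [hy]]
    exact gv_fiber_card_const φ hφ y
  have h2 := key Finset.univ
  have h3 : #{x : M | φ x ∈ (Finset.univ : Finset N)} = Fintype.card M := by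
    simp [Finset.card_univ]
  rw [key S, Finset.card_univ] at *
  rw [mul_assoc, mul_comm #{x : M | φ x = 0} (Fintype.card N), ← h2, h3]

end counting

section ball
variable {F : Type*} [Fintype F] [DecidableEq F] [Zero F] {n : ℕ}

private def gvFsupp (y : Fin n → F) : Finset (Fin n) := Finset.univ.filter fun j => y j ≠ 0

private lemma gv_card_support_le (s : Finset (Fin n)) :
    #(Finset.univ.filter fun y : Fin n → F => gvFsupp y = s)
      ≤ (Fintype.card F - 1) ^ s.card := by
  have hc : (Fintype.card F - 1) ^ s.card
      = Fintype.card ({ j // j ∈ s } → {x : F // x ≠ 0}) := by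
    rw [Fintype.card_fun, Fintype.card_subtype_compl, Fintype.card_subtype_eq,
      Fintype.card_coe]
  by_cases he : ∃ e : F, e ≠ 0
  · obtain ⟨e, he⟩ := he
    rw [hc, ← Finset.card_univ]
    apply Finset.card_le_card_of_injOn (fun y => fun j : { j // j ∈ s } =>
      if h : y j.1 ≠ 0 then (⟨y j.1, h⟩ : {x : F // x ≠ 0}) else ⟨e, he⟩)
    · intro y _; exact Finset.mem_univ _
    · intro y hy z hz h
      simp only [coe_filter, Set.mem_setOf_eq, mem_univ, true_and] at hy hz
      funext j
      by_cases hj : j ∈ s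
      · have hyj : y j ≠ 0 := by
          have : j ∈ gvFsupp y := hy ▸ hj
          simpa [gvFsupp] using this
        have hzj : z j ≠ 0 := by
          have : j ∈ gvFsupp z := hz ▸ hj
          simpa [gvFsupp] using this
        have := congrFun h ⟨j, hj⟩
        simp only at this
        rw [dif_pos hyj, dif_pos hzj] at this
        exact congrArg Subtype.val this
      · have h1 : y j = 0 := by
          by_contra hne
          exact hj (hy ▸ (by simpa [gvFsupp] using hne : j ∈ gvFsupp y))
        have h2 : z j = 0 := by
          by_contra hne
          exact hj (hz ▸ (by simpa [gvFsupp] using hne : j ∈ gvFsupp z))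
        rw [h1, h2]
  · push_neg at he
    by_cases hs : s = ∅
    · subst hs
      simp only [Finset.card_empty, pow_zero]
      apply Finset.card_le_one.2
      intro y _ z _
      funext j
      rw [he (y j), he (z j)]
    · convert Nat.zero_le _
      apply Finset.card_eq_zero.2
      apply Finset.filter_eq_empty_iff.2
      intro y _ hy
      apply hs
      rw [← hy]
      apply Finset.eq_empty_of_forall_notMem
      intro j hj
      exact (by simpa [gvFsupp] using hj : y j ≠ 0) (he (y j))

private lemma gv_card_norm_eq_le (i : ℕ) :
    #(Finset.univ.filter fun y : Fin n → F => hammingNorm y = i)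
      ≤ n.choose i * (Fintype.card F - 1) ^ i := by
  rw [Finset.card_eq_sum_card_fiberwise (f := gvFsupp)
    (t := Finset.powersetCard i Finset.univ)
    (fun y hy => by
      simp only [coe_filter, Set.mem_setOf_eq, mem_filter, mem_univ, true_and] at hy
      exact Finset.mem_powersetCard.2 ⟨Finset.subset_univ _, hy⟩)]
  calc ∑ s ∈ Finset.powersetCard i Finset.univ,
        #((Finset.univ.filter fun y : Fin n → F => hammingNorm y = i).filter
            fun y => gvFsupp y = s)
      ≤ ∑ s ∈ Finset.powersetCard i Finset.univ, (Fintype.card F - 1) ^ i := by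
        apply Finset.sum_le_sum
        intro s hs
        have hcard : s.card = i := (Finset.mem_powersetCard.1 hs).2
        calc #((Finset.univ.filter fun y : Fin n → F => hammingNorm y = i).filter
              fun y => gvFsupp y = s)
            ≤ #(Finset.univ.filter fun y : Fin n → F => gvFsupp y = s) := by
              apply Finset.card_le_card
              intro y hy
              simp only [mem_filter] at hy ⊢
              exact ⟨Finset.mem_univ _, hy.2⟩
          _ ≤ (Fintype.card F - 1) ^ s.card := gv_card_support_le s
          _ = (Fintype.card F - 1) ^ i := by rw [hcard]
    _ = n.choose i * (Fintype.card F - 1) ^ i := by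
        rw [Finset.sum_const, smul_eq_mul, Finset.card_powersetCard, Finset.card_univ,
          Fintype.card_fin]

private lemma gv_card_ball_le (d : ℕ) :
    #(Finset.univ.filter fun y : Fin n → F => hammingNorm y < d)
      ≤ ∑ i ∈ Finset.range d, n.choose i * (Fintype.card F - 1) ^ i := by
  rw [Finset.card_eq_sum_card_fiberwise (f := hammingNorm) (t := Finset.range d)
    (fun y hy => by simpa using (Finset.mem_filter.1 hy).2)]
  apply Finset.sum_le_sum
  intro i _
  calc #((Finset.univ.filter fun y : Fin n → F => hammingNorm y < d).filter
        fun y => hammingNorm y = i)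
      ≤ #(Finset.univ.filter fun y : Fin n → F => hammingNorm y = i) :=
        Finset.card_le_card (fun y hy => by
          simp only [mem_filter] at hy ⊢; exact ⟨Finset.mem_univ _, hy.2⟩)
    _ ≤ n.choose i * (Fintype.card F - 1) ^ i := gv_card_norm_eq_le i

end ball

section surj
variable {F : Type} [Field F] [Fintype F] [DecidableEq F] {k n : ℕ}

private def gvPhi (m : Fin k → F) : Matrix (Fin k) (Fin n) F →+ (Fin n → F) where
  toFun G := m ᵥ* G
  map_zero' := by simp
  map_add' A B := Matrix.vecMul_add A B m

private def gvPsi (x : Fin n → F) : Matrix (Fin k) (Fin n) F →+ (Fin k → F) where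
  toFun G := G *ᵥ x
  map_zero' := by simp
  map_add' A B := Matrix.add_mulVec A B x

private lemma gvPhi_surj {m : Fin k → F} (hm : m ≠ 0) : Surjective (gvPhi (n := n) m) := by
  obtain ⟨j, hj⟩ : ∃ j, m j ≠ 0 := by
    by_contra h; push_neg at h; exact hm (funext h)
  intro y
  refine ⟨Matrix.of fun a b => if a = j then (m j)⁻¹ * y b else 0, ?_⟩
  funext b
  simp only [gvPhi, AddMonoidHom.coe_mk, ZeroHom.coe_mk, Matrix.vecMul, dotProduct,
    Matrix.of_apply]
  rw [Finset.sum_eq_single j]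
  · rw [if_pos rfl, ← mul_assoc, mul_inv_cancel₀ hj, one_mul]
  · intro a _ ha; rw [if_neg ha, mul_zero]
  · intro h; exact absurd (Finset.mem_univ j) h

private lemma gvPsi_surj {x : Fin n → F} (hx : x ≠ 0) : Surjective (gvPsi (k := k) x) := by
  obtain ⟨i, hi⟩ : ∃ i, x i ≠ 0 := by
    by_contra h; push_neg at h; exact hx (funext h)
  intro z
  refine ⟨Matrix.of fun a b => if b = i then (x i)⁻¹ * z a else 0, ?_⟩
  funext a
  simp only [gvPsi, AddMonoidHom.coe_mk, ZeroHom.coe_mk, Matrix.mulVec, dotProduct,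
    Matrix.of_apply]
  rw [Finset.sum_eq_single i]
  · rw [if_pos rfl]; field_simp
  · intro b _ hb; rw [if_neg hb, zero_mul]
  · intro h; exact absurd (Finset.mem_univ i) h

end surj

/-- A Gilbert–Varshamov type bound for codes with a designed dual distance: under the
two counting conditions there is an `[n,k]_q` code with minimum distance at least `d`
whose dual has minimum distance at least `d⊥`. -/
theorem gv_code_with_dual_distance (F : Type) [Field F] [Fintype F] [DecidableEq F]
    (q n k d dperp : ℕ) (hq : Fintype.card F = q)
    (hk : 1 ≤ k) (hkn : k < n) (hd : 1 ≤ d) (hdp : 1 ≤ dperp)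
    (h1 : 2 * ∑ i ∈ Finset.range d, n.choose i * (q - 1) ^ i < q ^ (n - k))
    (h2 : 2 * ∑ i ∈ Finset.range dperp, n.choose i * (q - 1) ^ i < q ^ k) :
    ∃ C : Submodule F (Fin n → F), Module.finrank F C = k ∧
      (∀ c ∈ C, c ≠ 0 → d ≤ hammingNorm c) ∧
      (∀ x : Fin n → F, (∀ c ∈ C, ∑ i, x i * c i = 0) → x ≠ 0 → dperp ≤ hammingNorm x) := by
  classical
  subst hq
  set q := Fintype.card F with hqdef
  -- abbreviations and basic cardinalities
  set N := Fintype.card (Matrix (Fin k) (Fin n) F) with hN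
  have hQn : Fintype.card (Fin n → F) = q ^ n := by simp; rfl
  have hQk : Fintype.card (Fin k → F) = q ^ k := by simp; rfl
  have hNpos : 0 < N := Fintype.card_pos
  have hqpos : 0 < q := Fintype.card_pos
  -- balls and their sizes
  set Ball1 : Finset (Fin n → F) := Finset.univ.filter (fun y => hammingNorm y < d)
    with hBall1
  set Ball2 : Finset (Fin n → F) := Finset.univ.filter (fun y => hammingNorm y < dperp)
    with hBall2
  have hB1 : 2 * Ball1.card + 1 ≤ q ^ (n - k) := by
    have hb : Ball1.card ≤ ∑ i ∈ Finset.range d, n.choose i * (q - 1) ^ i := by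
      rw [hBall1, hqdef]
      exact gv_card_ball_le (F := F) (n := n) d
    omega
  have hB2 : 2 * Ball2.card + 1 ≤ q ^ k := by
    have hb : Ball2.card ≤ ∑ i ∈ Finset.range dperp, n.choose i * (q - 1) ^ i := by
      rw [hBall2, hqdef]
      exact gv_card_ball_le (F := F) (n := n) dperp
    omega
  -- bad sets
  set s1 : Finset (Fin k → F) := Finset.univ.filter (fun m => m ≠ 0) with hs1
  set s2 : Finset (Fin n → F) :=
    Finset.univ.filter (fun x => x ≠ 0 ∧ hammingNorm x < dperp) with hs2
  set Bad1 : Finset (Matrix (Fin k) (Fin n) F) :=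
    Finset.univ.filter (fun G => ∃ m ∈ s1, gvPhi m G ∈ Ball1) with hBad1
  set Bad2 : Finset (Matrix (Fin k) (Fin n) F) :=
    Finset.univ.filter (fun G => ∃ x ∈ s2, gvPsi x G ∈ ({0} : Finset (Fin k → F)))
    with hBad2
  -- counting Bad1
  have count1 : Bad1.card * q ^ n ≤ q ^ k * (Ball1.card * N) := by
    have hsub : Bad1 ⊆ s1.biUnion (fun m =>
        Finset.univ.filter (fun G => gvPhi m G ∈ Ball1)) := by
      intro G hG
      obtain ⟨m, hm, hmG⟩ := (Finset.mem_filter.1 hG).2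
      exact Finset.mem_biUnion.2 ⟨m, hm, Finset.mem_filter.2 ⟨Finset.mem_univ _, hmG⟩⟩
    calc Bad1.card * q ^ n
        ≤ (∑ m ∈ s1, #(Finset.univ.filter (fun G => gvPhi m G ∈ Ball1))) * q ^ n := by
          exact Nat.mul_le_mul_right _
            ((Finset.card_le_card hsub).trans (Finset.card_biUnion_le))
      _ = ∑ m ∈ s1, #(Finset.univ.filter (fun G => gvPhi m G ∈ Ball1)) * q ^ n := by
          rw [Finset.sum_mul]
      _ = ∑ _m ∈ s1, Ball1.card * N := by
          apply Finset.sum_congr rfl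
          intro m hm
          have hm0 : m ≠ 0 := (Finset.mem_filter.1 hm).2
          have := gv_count_preimage (gvPhi (n := n) m) (gvPhi_surj hm0) Ball1
          rwa [hQn] at this
      _ = s1.card * (Ball1.card * N) := by rw [Finset.sum_const, smul_eq_mul]
      _ ≤ q ^ k * (Ball1.card * N) := by
          exact Nat.mul_le_mul_right _ (by
            calc s1.card ≤ Fintype.card (Fin k → F) := by
                  rw [← Finset.card_univ]; exact Finset.card_filter_le _ _
              _ = q ^ k := hQk)
  -- counting Bad2
  have count2 : Bad2.card * q ^ k ≤ Ball2.card * N := by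
    have hsub : Bad2 ⊆ s2.biUnion (fun x =>
        Finset.univ.filter (fun G => gvPsi x G ∈ ({0} : Finset (Fin k → F)))) := by
      intro G hG
      obtain ⟨x, hx, hxG⟩ := (Finset.mem_filter.1 hG).2
      exact Finset.mem_biUnion.2 ⟨x, hx, Finset.mem_filter.2 ⟨Finset.mem_univ _, hxG⟩⟩
    calc Bad2.card * q ^ k
        ≤ (∑ x ∈ s2, #(Finset.univ.filter
            (fun G => gvPsi x G ∈ ({0} : Finset (Fin k → F))))) * q ^ k := by
          exact Nat.mul_le_mul_right _
            ((Finset.card_le_card hsub).trans (Finset.card_biUnion_le))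
      _ = ∑ x ∈ s2, #(Finset.univ.filter
            (fun G => gvPsi x G ∈ ({0} : Finset (Fin k → F)))) * q ^ k := by
          rw [Finset.sum_mul]
      _ = ∑ _x ∈ s2, N := by
          apply Finset.sum_congr rfl
          intro x hx
          have hx0 : x ≠ 0 := ((Finset.mem_filter.1 hx).2).1
          have := gv_count_preimage (gvPsi (k := k) x) (gvPsi_surj hx0)
            ({0} : Finset (Fin k → F))
          rw [hQk] at this
          simpa using this
      _ = s2.card * N := by rw [Finset.sum_const, smul_eq_mul]
      _ ≤ Ball2.card * N := by
          apply Nat.mul_le_mul_right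
          apply Finset.card_le_card
          intro x hx
          simp only [hs2, hBall2, Finset.mem_filter] at hx ⊢
          exact ⟨hx.1, hx.2.2⟩
  -- total count is less than the number of matrices
  have hkn' : k ≤ n := le_of_lt hkn
  have hpow : q ^ k * q ^ (n - k) = q ^ n := by
    rw [← pow_add]
    congr 1
    omega
  have main : Bad1.card + Bad2.card < N := by
    set X := Bad1.card
    set Y := Bad2.card
    set B1 := Ball1.card
    set B2 := Ball2.card
    set r := q ^ (n - k)
    set Qn := q ^ n
    set Qk := q ^ k
    have hQkpos : 1 ≤ Qk := Nat.one_le_pow _ _ hqpos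
    have hQnpos : 1 ≤ Qn := Nat.one_le_pow _ _ hqpos
    have key : 2 * (X + Y) * (Qn * Qk) < 2 * N * (Qn * Qk) := by
      have t1 : (2 * B1) * (Qk * Qk * N) + Qk * Qk * N ≤ r * (Qk * Qk * N) := by
        calc (2 * B1) * (Qk * Qk * N) + Qk * Qk * N
            = (2 * B1 + 1) * (Qk * Qk * N) := by ring
          _ ≤ r * (Qk * Qk * N) := Nat.mul_le_mul_right _ hB1
      have t2 : (2 * B2) * (N * Qn) + N * Qn ≤ Qk * (N * Qn) := by
        calc (2 * B2) * (N * Qn) + N * Qn = (2 * B2 + 1) * (N * Qn) := by ring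
          _ ≤ Qk * (N * Qn) := Nat.mul_le_mul_right _ hB2
      have hstep : 2 * (X + Y) * (Qn * Qk) + (Qk * Qk * N + N * Qn)
          ≤ 2 * N * (Qn * Qk) := by
        calc 2 * (X + Y) * (Qn * Qk) + (Qk * Qk * N + N * Qn)
            = ((X * Qn) * (2 * Qk) + (Y * Qk) * (2 * Qn)) + (Qk * Qk * N + N * Qn) := by
              ring
          _ ≤ ((Qk * (B1 * N)) * (2 * Qk) + (B2 * N) * (2 * Qn))
              + (Qk * Qk * N + N * Qn) := by
              have := Nat.add_le_add (Nat.mul_le_mul_right (2 * Qk) count1)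
                (Nat.mul_le_mul_right (2 * Qn) count2)
              omega
          _ = ((2 * B1) * (Qk * Qk * N) + Qk * Qk * N)
              + ((2 * B2) * (N * Qn) + N * Qn) := by ring
          _ ≤ r * (Qk * Qk * N) + Qk * (N * Qn) := Nat.add_le_add t1 t2
          _ = (Qk * r) * (Qk * N) + Qk * (N * Qn) := by ring
          _ = 2 * N * (Qn * Qk) := by rw [hpow]; ring
      have hposterm : 0 < Qk * Qk * N + N * Qn := by positivity
      omega
    have h2' : 2 * (X + Y) < 2 * N :=
      Nat.lt_of_mul_lt_mul_right (by
        calc (2 * (X + Y)) * (Qn * Qk) = 2 * (X + Y) * (Qn * Qk) := by ring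
          _ < 2 * N * (Qn * Qk) := key
          _ = (2 * N) * (Qn * Qk) := by ring)
    omega
  -- pick a good matrix
  have hnotsub : ¬ (Finset.univ : Finset (Matrix (Fin k) (Fin n) F)) ⊆ Bad1 ∪ Bad2 := by
    intro hsub
    have := Finset.card_le_card hsub
    rw [Finset.card_univ] at this
    have := Finset.card_union_le Bad1 Bad2
    omega
  obtain ⟨G, -, hG⟩ := Finset.not_subset.1 hnotsub
  have hG1 : ∀ m : Fin k → F, m ≠ 0 → d ≤ hammingNorm (m ᵥ* G) := by
    intro m hm
    by_contra hlt
    push_neg at hlt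
    apply hG
    apply Finset.mem_union_left
    refine Finset.mem_filter.2 ⟨Finset.mem_univ _, ⟨m, ?_, ?_⟩⟩
    · exact Finset.mem_filter.2 ⟨Finset.mem_univ _, hm⟩
    · exact Finset.mem_filter.2 ⟨Finset.mem_univ _, hlt⟩
  have hG2 : ∀ x : Fin n → F, x ≠ 0 → hammingNorm x < dperp → G *ᵥ x ≠ 0 := by
    intro x hx hlt hzero
    apply hG
    apply Finset.mem_union_right
    refine Finset.mem_filter.2 ⟨Finset.mem_univ _, ⟨x, ?_, ?_⟩⟩
    · exact Finset.mem_filter.2 ⟨Finset.mem_univ _, hx, hlt⟩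
    · exact Finset.mem_singleton.2 hzero
  -- the code
  refine ⟨LinearMap.range (Matrix.vecMulLinear G), ?_, ?_, ?_⟩
  · have hinj : Function.Injective (Matrix.vecMulLinear G) := by
      rw [← LinearMap.ker_eq_bot]
      rw [LinearMap.ker_eq_bot']
      intro m hm
      by_contra hm0
      have := hG1 m hm0
      rw [show m ᵥ* G = 0 from hm] at this
      simp [hammingNorm_zero] at this
      omega
    rw [LinearMap.finrank_range_of_inj hinj, Module.finrank_pi, Fintype.card_fin]
  · intro c hc hc0
    obtain ⟨m, rfl⟩ := LinearMap.mem_range.1 hc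
    rw [Matrix.vecMulLinear_apply] at hc0 ⊢
    apply hG1
    intro hm0
    apply hc0
    rw [hm0]
    exact Matrix.zero_vecMul G
  · intro x hx hx0
    by_contra hlt
    push_neg at hlt
    apply hG2 x hx0 hlt
    funext j
    have hrow : (G j : Fin n → F) ∈ LinearMap.range (Matrix.vecMulLinear G) :=
      ⟨Pi.single j 1, by rw [Matrix.vecMulLinear_apply, Matrix.single_one_vecMul]; rfl⟩
    have := hx (G j) hrow
    calc (G *ᵥ x) j = ∑ i, G j i * x i := rfl
      _ = ∑ i, x i * G j i := by
          exact Finset.sum_congr rfl (fun i _ => mul_comm _ _)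
      _ = 0 := this
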